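/- The reduced power graph R(G) of a finite group G satisfies box(R(G)) = box(Pow(G)) and cub(R(G)) = cub(Pow(G)). -/

import Mathlib

/-- An interval graph: adjacency given by intersection of closed real intervals. -/
def IsIntervalGraph {V : Type*} (I : SimpleGraph V) : Prop :=
  ∃ a b : V → ℝ, ∀ u v : V,
    I.Adj u v ↔ u ≠ v ∧ (Set.Icc (a u) (b u) ∩ Set.Icc (a v) (b v)).Nonempty

/-- A unit interval graph: adjacency given by intersection of closed unit intervals. -/
def IsUnitIntervalGraph {V : Type*} (I : SimpleGraph V) : Prop :=
  ∃ a : V → ℝ, ∀ u v : V,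
    I.Adj u v ↔ u ≠ v ∧ (Set.Icc (a u) (a u + 1) ∩ Set.Icc (a v) (a v + 1)).Nonempty

/-- Boxicity: least `k` such that `G` is the intersection of `k` interval graphs. -/
noncomputable def boxicity {V : Type*} (G : SimpleGraph V) : ℕ :=
  sInf {k | ∃ I : Fin k → SimpleGraph V, (∀ i, IsIntervalGraph (I i)) ∧
    ∀ u v, G.Adj u v ↔ (u ≠ v ∧ ∀ i, (I i).Adj u v)}

/-- Cubicity: least `k` such that `G` is the intersection of `k` unit interval graphs. -/
noncomputable def cubicity {V : Type*} (G : SimpleGraph V) : ℕ :=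
  sInf {k | ∃ I : Fin k → SimpleGraph V, (∀ i, IsUnitIntervalGraph (I i)) ∧
    ∀ u v, G.Adj u v ↔ (u ≠ v ∧ ∀ i, (I i).Adj u v)}

/-- Transitive closure of the Cartesian product of complete graphs `K_{m i + 1}`. -/
def TCC {d : ℕ} (m : Fin d → ℕ) : SimpleGraph (∀ i, Fin (m i + 1)) where
  Adj x y := x ≠ y ∧ ((∀ i, (x i : ℕ) ≤ y i) ∨ (∀ i, (y i : ℕ) ≤ x i))
  symm := ⟨fun _ _ h => ⟨h.1.symm, h.2.symm⟩⟩
  loopless := ⟨fun _ h => h.1 rfl⟩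

/-- Transitive closure of the `s`-dimensional hypercube. -/
def TCH (s : ℕ) : SimpleGraph (∀ _ : Fin s, Fin 2) := TCC (fun _ => 1)

/-- The power graph of a group: distinct `x, y` adjacent iff one is a power of the other. -/
def powerGraph (G : Type*) [Group G] : SimpleGraph G where
  Adj x y := x ≠ y ∧ ((∃ m : ℕ, y = x ^ m) ∨ (∃ m : ℕ, x = y ^ m))
  symm := ⟨fun _ _ h => ⟨h.1.symm, h.2.symm⟩⟩
  loopless := ⟨fun _ h => h.1 rfl⟩

/-- `x ∼ y` iff `x` and `y` generate the same cyclic subgroup. -/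
def genSetoid (G : Type*) [Group G] : Setoid G where
  r x y := Subgroup.zpowers x = Subgroup.zpowers y
  iseqv := ⟨fun _ => rfl, Eq.symm, Eq.trans⟩

/-- The reduced power graph: vertices are the classes of `genSetoid`, two distinct classes
being adjacent iff their representatives are adjacent in the power graph. -/
def reducedPowerGraph (G : Type*) [Group G] : SimpleGraph (Quotient (genSetoid G)) where
  Adj a b := a ≠ b ∧ ∃ x y : G,
    Quotient.mk (genSetoid G) x = a ∧ Quotient.mk (genSetoid G) y = b ∧ (powerGraph G).Adj x y
  symm := by
    constructor
    rintro a b ⟨hab, x, y, hx, hy, hadj⟩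
    exact ⟨hab.symm, y, x, hy, hx, hadj.symm⟩
  loopless := ⟨fun _ h => h.1 rfl⟩


/-- The interval graph determined by interval data `a b`. -/
def intervalGraphOf {V : Type*} (a b : V → ℝ) : SimpleGraph V where
  Adj u v := u ≠ v ∧ (Set.Icc (a u) (b u) ∩ Set.Icc (a v) (b v)).Nonempty
  symm := ⟨fun u v ⟨h, s⟩ => ⟨h.symm, by rwa [Set.inter_comm]⟩⟩
  loopless := ⟨fun _ h => h.1 rfl⟩

lemma isIntervalGraph_of {V : Type*} (a b : V → ℝ) : IsIntervalGraph (intervalGraphOf a b) :=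
  ⟨a, b, fun _ _ => Iff.rfl⟩

lemma isUnitIntervalGraph_of {V : Type*} (a : V → ℝ) :
    IsUnitIntervalGraph (intervalGraphOf a (fun u => a u + 1)) :=
  ⟨a, fun _ _ => Iff.rfl⟩

lemma transfer_box {V W : Type*} (f : V → W) (G : SimpleGraph V) (H : SimpleGraph W)
    (hadj : ∀ u v, G.Adj u v ↔ (u ≠ v ∧ (f u = f v ∨ H.Adj (f u) (f v))))
    (hne : ∀ u v : V, u ≠ v → f u = f v → ∃ w, H.Adj (f u) w)
    (k : ℕ)
    (hk : ∃ I : Fin k → SimpleGraph W, (∀ i, IsIntervalGraph (I i)) ∧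
      ∀ u v, H.Adj u v ↔ (u ≠ v ∧ ∀ i, (I i).Adj u v)) :
    ∃ J : Fin k → SimpleGraph V, (∀ i, IsIntervalGraph (J i)) ∧
      ∀ u v, G.Adj u v ↔ (u ≠ v ∧ ∀ i, (J i).Adj u v) := by
  obtain ⟨I, hI, hHI⟩ := hk
  choose a b hab using hI
  refine ⟨fun i => intervalGraphOf (fun v => a i (f v)) (fun v => b i (f v)),
    fun i => isIntervalGraph_of _ _, fun u v => ?_⟩
  constructor
  · intro h
    have huv : u ≠ v := (hadj u v).1 h |>.1
    refine ⟨huv, fun i => ?_⟩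
    rcases (hadj u v).1 h |>.2 with hfe | hH
    · obtain ⟨w, hw⟩ := hne u v huv hfe
      have := ((hab i (f u) w).1 (((hHI _ _).1 hw).2 i)).2
      obtain ⟨x, hx, _⟩ := this
      refine ⟨huv, ?_⟩
      show (Set.Icc (a i (f u)) (b i (f u)) ∩ Set.Icc (a i (f v)) (b i (f v))).Nonempty
      rw [← hfe]
      exact ⟨x, hx, hx⟩
    · have := ((hab i (f u) (f v)).1 (((hHI _ _).1 hH).2 i)).2
      exact ⟨huv, this⟩
  · rintro ⟨huv, hall⟩
    refine (hadj u v).2 ⟨huv, ?_⟩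
    by_cases hfe : f u = f v
    · exact Or.inl hfe
    · exact Or.inr ((hHI _ _).2 ⟨hfe, fun i => (hab i _ _).2 ⟨hfe, (hall i).2⟩⟩)

lemma transfer_cube {V W : Type*} (f : V → W) (G : SimpleGraph V) (H : SimpleGraph W)
    (hadj : ∀ u v, G.Adj u v ↔ (u ≠ v ∧ (f u = f v ∨ H.Adj (f u) (f v))))
    (k : ℕ)
    (hk : ∃ I : Fin k → SimpleGraph W, (∀ i, IsUnitIntervalGraph (I i)) ∧
      ∀ u v, H.Adj u v ↔ (u ≠ v ∧ ∀ i, (I i).Adj u v)) :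
    ∃ J : Fin k → SimpleGraph V, (∀ i, IsUnitIntervalGraph (J i)) ∧
      ∀ u v, G.Adj u v ↔ (u ≠ v ∧ ∀ i, (J i).Adj u v) := by
  obtain ⟨I, hI, hHI⟩ := hk
  choose a hab using hI
  refine ⟨fun i => intervalGraphOf (fun v => a i (f v)) (fun v => a i (f v) + 1),
    fun i => isUnitIntervalGraph_of _, fun u v => ?_⟩
  constructor
  · intro h
    have huv : u ≠ v := (hadj u v).1 h |>.1
    refine ⟨huv, fun i => ?_⟩
    rcases (hadj u v).1 h |>.2 with hfe | hH
    · refine ⟨huv, ?_⟩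
      show (Set.Icc (a i (f u)) (a i (f u) + 1) ∩ Set.Icc (a i (f v)) (a i (f v) + 1)).Nonempty
      rw [← hfe]
      exact ⟨a i (f u), ⟨⟨le_refl _, by linarith⟩, ⟨le_refl _, by linarith⟩⟩⟩
    · exact ⟨huv, ((hab i (f u) (f v)).1 (((hHI _ _).1 hH).2 i)).2⟩
  · rintro ⟨huv, hall⟩
    refine (hadj u v).2 ⟨huv, ?_⟩
    by_cases hfe : f u = f v
    · exact Or.inl hfe
    · exact Or.inr ((hHI _ _).2 ⟨hfe, fun i => (hab i _ _).2 ⟨hfe, (hall i).2⟩⟩)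

section PowerGraphLemmas

variable {G : Type*} [Group G] [Fintype G]

lemma powerGraph_adj_iff (x y : G) :
    (powerGraph G).Adj x y ↔ x ≠ y ∧ (y ∈ Subgroup.zpowers x ∨ x ∈ Subgroup.zpowers y) := by
  have h : ∀ a b : G, (∃ m : ℕ, b = a ^ m) ↔ b ∈ Subgroup.zpowers a := by
    intro a b
    rw [← mem_powers_iff_mem_zpowers, Submonoid.mem_powers_iff]
    simp [eq_comm]
  exact and_congr Iff.rfl (or_congr (h x y) (h y x))

lemma reducedPowerGraph_adj_iff (x y : G) :
    (reducedPowerGraph G).Adj (Quotient.mk (genSetoid G) x) (Quotient.mk (genSetoid G) y) ↔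
      Quotient.mk (genSetoid G) x ≠ Quotient.mk (genSetoid G) y ∧
        (y ∈ Subgroup.zpowers x ∨ x ∈ Subgroup.zpowers y) := by
  constructor
  · rintro ⟨hne, x', y', hx, hy, hadj⟩
    refine ⟨hne, ?_⟩
    have hx' : Subgroup.zpowers x' = Subgroup.zpowers x := Quotient.exact hx
    have hy' : Subgroup.zpowers y' = Subgroup.zpowers y := Quotient.exact hy
    rcases ((powerGraph_adj_iff x' y').1 hadj).2 with h | h
    · left
      have : Subgroup.zpowers y' ≤ Subgroup.zpowers x := by
        rw [hx'] at h; exact (Subgroup.zpowers_le).2 h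
      exact this (hy' ▸ Subgroup.mem_zpowers y)
    · right
      have : Subgroup.zpowers x' ≤ Subgroup.zpowers y := by
        rw [hy'] at h; exact (Subgroup.zpowers_le).2 h
      exact this (hx' ▸ Subgroup.mem_zpowers x)
  · rintro ⟨hne, hor⟩
    have hxy : x ≠ y := fun h => hne (by rw [h])
    exact ⟨hne, x, y, rfl, rfl, (powerGraph_adj_iff x y).2 ⟨hxy, hor⟩⟩

lemma pow_adj_quot (u v : G) :
    (powerGraph G).Adj u v ↔ (u ≠ v ∧
      (Quotient.mk (genSetoid G) u = Quotient.mk (genSetoid G) v ∨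
        (reducedPowerGraph G).Adj (Quotient.mk (genSetoid G) u) (Quotient.mk (genSetoid G) v))) := by
  rw [powerGraph_adj_iff, reducedPowerGraph_adj_iff]
  constructor
  · rintro ⟨hne, hor⟩
    refine ⟨hne, ?_⟩
    by_cases hq : Quotient.mk (genSetoid G) u = Quotient.mk (genSetoid G) v
    · exact Or.inl hq
    · exact Or.inr ⟨hq, hor⟩
  · rintro ⟨hne, hq | ⟨_, hor⟩⟩
    · refine ⟨hne, Or.inl ?_⟩
      have : Subgroup.zpowers u = Subgroup.zpowers v := Quotient.exact hq
      exact this ▸ Subgroup.mem_zpowers v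
    · exact ⟨hne, hor⟩

lemma quot_nontrivial_class (u v : G) (huv : u ≠ v)
    (hq : Quotient.mk (genSetoid G) u = Quotient.mk (genSetoid G) v) :
    ∃ w, (reducedPowerGraph G).Adj (Quotient.mk (genSetoid G) u) w := by
  refine ⟨Quotient.mk (genSetoid G) 1, (reducedPowerGraph_adj_iff u 1).2
    ⟨?_, Or.inl (Subgroup.one_mem _)⟩⟩
  intro h
  have h1 : Subgroup.zpowers u = Subgroup.zpowers (1 : G) := Quotient.exact h
  have h2 : Subgroup.zpowers u = Subgroup.zpowers v := Quotient.exact hq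
  rw [Subgroup.zpowers_one_eq_bot] at h1
  have hu : u = 1 := by
    have := Subgroup.mem_zpowers u
    rw [h1] at this
    exact this
  have hv : v = 1 := by
    have := Subgroup.mem_zpowers v
    rw [← h2, h1] at this
    exact this
  exact huv (hu.trans hv.symm)

lemma red_adj_out (a b : Quotient (genSetoid G)) :
    (reducedPowerGraph G).Adj a b ↔ (a ≠ b ∧
      (a.out = b.out ∨ (powerGraph G).Adj a.out b.out)) := by
  conv_lhs => rw [← Quotient.out_eq a, ← Quotient.out_eq b]
  rw [show (⟦a.out⟧ : Quotient (genSetoid G)) = Quotient.mk (genSetoid G) a.out from rfl,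
    show (⟦b.out⟧ : Quotient (genSetoid G)) = Quotient.mk (genSetoid G) b.out from rfl,
    reducedPowerGraph_adj_iff, powerGraph_adj_iff]
  rw [Quotient.out_eq, Quotient.out_eq]
  constructor
  · rintro ⟨hne, hor⟩
    have : a.out ≠ b.out := fun h => hne (by rw [← Quotient.out_eq a, ← Quotient.out_eq b, h])
    exact ⟨hne, Or.inr ⟨this, hor⟩⟩
  · rintro ⟨hne, h | ⟨_, hor⟩⟩
    · exact absurd (by rw [← Quotient.out_eq a, ← Quotient.out_eq b, h]) hne
    · exact ⟨hne, hor⟩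

end PowerGraphLemmas

theorem boxicity_cubicity_reducedPowerGraph (G : Type*) [Group G] [Fintype G] :
    boxicity (reducedPowerGraph G) = boxicity (powerGraph G) ∧
    cubicity (reducedPowerGraph G) = cubicity (powerGraph G) := by
  have hadj1 := pow_adj_quot (G := G)
  have hadj2 : ∀ a b : Quotient (genSetoid G), (reducedPowerGraph G).Adj a b ↔
      (a ≠ b ∧ (a.out = b.out ∨ (powerGraph G).Adj a.out b.out)) := red_adj_out
  have hne1 := quot_nontrivial_class (G := G)
  have hbox : {k | ∃ I : Fin k → SimpleGraph (Quotient (genSetoid G)),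
        (∀ i, IsIntervalGraph (I i)) ∧
        ∀ u v, (reducedPowerGraph G).Adj u v ↔ (u ≠ v ∧ ∀ i, (I i).Adj u v)} =
      {k | ∃ I : Fin k → SimpleGraph G, (∀ i, IsIntervalGraph (I i)) ∧
        ∀ u v, (powerGraph G).Adj u v ↔ (u ≠ v ∧ ∀ i, (I i).Adj u v)} := by
    ext k
    constructor
    · exact transfer_box (Quotient.mk (genSetoid G)) (powerGraph G) (reducedPowerGraph G)
        hadj1 hne1 k
    · exact transfer_box Quotient.out (reducedPowerGraph G) (powerGraph G) hadj2
        (fun a b hab h => absurd (by rw [← Quotient.out_eq a, ← Quotient.out_eq b, h]) hab) k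
  have hcube : {k | ∃ I : Fin k → SimpleGraph (Quotient (genSetoid G)),
        (∀ i, IsUnitIntervalGraph (I i)) ∧
        ∀ u v, (reducedPowerGraph G).Adj u v ↔ (u ≠ v ∧ ∀ i, (I i).Adj u v)} =
      {k | ∃ I : Fin k → SimpleGraph G, (∀ i, IsUnitIntervalGraph (I i)) ∧
        ∀ u v, (powerGraph G).Adj u v ↔ (u ≠ v ∧ ∀ i, (I i).Adj u v)} := by
    ext k
    constructor
    · exact transfer_cube (Quotient.mk (genSetoid G)) (powerGraph G) (reducedPowerGraph G)
        hadj1 k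
    · exact transfer_cube Quotient.out (reducedPowerGraph G) (powerGraph G) hadj2 k
  exact ⟨congrArg sInf hbox, congrArg sInf hcube⟩
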